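/- Let f: [0,∞) → ℝ be continuous and suppose there exists A ∈ ℝ with f(x)/(1+x²) → A as x → ∞. Then for every 0 ≤ a < b < ∞, the sequence of functions x ↦ K_n^μ(f; x) converges uniformly to f on [a,b] as n → ∞. -/

import Mathlib

open scoped BigOperators

/-- The Dunkl coefficients γ_μ(i). -/
noncomputable def gammaMu (μ : ℝ) (i : ℕ) : ℝ :=
  if Even i then
    2 ^ i * (Nat.factorial (i / 2)) *
      Real.Gamma (((i / 2 : ℕ) : ℝ) + μ + 1 / 2) / Real.Gamma (μ + 1 / 2)
  else
    2 ^ i * (Nat.factorial (i / 2)) *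
      Real.Gamma (((i / 2 : ℕ) : ℝ) + μ + 3 / 2) / Real.Gamma (μ + 1 / 2)

/-- θ_i = 0 if i is even, 1 if i is odd. -/
noncomputable def thetaFn (i : ℕ) : ℝ := if Even i then 0 else 1

/-- The Dunkl exponential e_μ(x) = Σ x^i / γ_μ(i). -/
noncomputable def dunklExp (μ : ℝ) (x : ℝ) : ℝ := ∑' i : ℕ, x ^ i / gammaMu μ i

/-- The Dunkl operator (Λ_μ f)(x) = f'(x) + μ (f(x) - f(-x)) / x. -/
noncomputable def dunklOp (μ : ℝ) (f : ℝ → ℝ) (x : ℝ) : ℝ :=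
  deriv f x + μ * (f x - f (-x)) / x

/-- Q(t) = Σ c_i t^i / γ_μ(i). -/
noncomputable def Qf (μ : ℝ) (c : ℕ → ℝ) (t : ℝ) : ℝ := ∑' i : ℕ, c i * t ^ i / gammaMu μ i

/-- The Dunkl–Appell polynomials q_i(x) = Σ_{j=0}^i (γ_μ(i)/(γ_μ(j)γ_μ(i-j))) c_{i-j} x^j. -/
noncomputable def qPoly (μ : ℝ) (c : ℕ → ℝ) (i : ℕ) (x : ℝ) : ℝ :=
  ∑ j ∈ Finset.range (i + 1),
    gammaMu μ i / (gammaMu μ j * gammaMu μ (i - j)) * c (i - j) * x ^ j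

/-- The operators K_n^μ(f;x). -/
noncomputable def Kop (μ : ℝ) (c : ℕ → ℝ) (n : ℕ) (f : ℝ → ℝ) (x : ℝ) : ℝ :=
  1 / (Qf μ c 1 * dunklExp μ (n * x)) *
    ∑' i : ℕ, qPoly μ c i (n * x) / gammaMu μ i * f (((i : ℝ) + 2 * μ * thetaFn i) / n)

/-- λ_i = i + 2 μ θ_i -/
noncomputable def lamK (μ : ℝ) (i : ℕ) : ℝ := (i : ℝ) + 2 * μ * thetaFn i

lemma thetaFn_nonneg (i : ℕ) : 0 ≤ thetaFn i := by
  unfold thetaFn; split <;> norm_num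

lemma thetaFn_le_one (i : ℕ) : thetaFn i ≤ 1 := by
  unfold thetaFn; split <;> norm_num

lemma lamK_nonneg (μ : ℝ) (hμ : 0 ≤ μ) (i : ℕ) : 0 ≤ lamK μ i := by
  have := thetaFn_nonneg i
  unfold lamK; positivity

lemma lamK_zero (μ : ℝ) : lamK μ 0 = 0 := by
  simp [lamK, thetaFn]

lemma lamK_ge (μ : ℝ) (hμ : 0 ≤ μ) (i : ℕ) : (i : ℝ) ≤ lamK μ i := by
  have := thetaFn_nonneg i
  unfold lamK; nlinarith

lemma lamK_le (μ : ℝ) (hμ : 0 ≤ μ) (i : ℕ) : lamK μ i ≤ (i : ℝ) + 2 * μ := by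
  have := thetaFn_le_one i
  unfold lamK; nlinarith

lemma gammaMu_pos (μ : ℝ) (hμ : 0 ≤ μ) (i : ℕ) : 0 < gammaMu μ i := by
  have h0 : (0:ℝ) < Real.Gamma (μ + 1 / 2) := Real.Gamma_pos_of_pos (by linarith)
  unfold gammaMu
  split
  · have h1 : (0:ℝ) < Real.Gamma (((i / 2 : ℕ) : ℝ) + μ + 1 / 2) :=
      Real.Gamma_pos_of_pos (by positivity)
    positivity
  · have h1 : (0:ℝ) < Real.Gamma (((i / 2 : ℕ) : ℝ) + μ + 3 / 2) :=
      Real.Gamma_pos_of_pos (by positivity)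
    positivity

lemma gammaMu_zero (μ : ℝ) (hμ : 0 ≤ μ) : gammaMu μ 0 = 1 := by
  have h0 : (0:ℝ) < Real.Gamma (μ + 1 / 2) := Real.Gamma_pos_of_pos (by linarith)
  simp [gammaMu]
  field_simp
  rw [show (μ * 2 + 1) / 2 = μ + 1 / 2 by ring]; exact h0.ne'

lemma gammaMu_succ (μ : ℝ) (hμ : 0 ≤ μ) (i : ℕ) :
    gammaMu μ (i + 1) = gammaMu μ i * lamK μ (i + 1) := by
  have h0 : Real.Gamma (μ + 1 / 2) ≠ 0 := (Real.Gamma_pos_of_pos (by linarith)).ne'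
  rcases Nat.even_or_odd i with ⟨k, hk⟩ | ⟨k, hk⟩
  · -- i = 2k even, i+1 odd
    subst hk
    have he : Even (k + k) := ⟨k, rfl⟩
    have ho : ¬ Even (k + k + 1) := by simp [Nat.even_add_one, he]
    have hd1 : (k + k) / 2 = k := by omega
    have hd2 : (k + k + 1) / 2 = k := by omega
    have hΓ : Real.Gamma ((k : ℝ) + μ + 3 / 2) =
        ((k : ℝ) + μ + 1 / 2) * Real.Gamma ((k : ℝ) + μ + 1 / 2) := by
      have := Real.Gamma_add_one (s := (k : ℝ) + μ + 1 / 2) (by positivity)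
      rw [show (k : ℝ) + μ + 3/2 = ((k:ℝ) + μ + 1/2) + 1 by ring, this]
    unfold gammaMu lamK thetaFn
    rw [if_neg ho, if_pos he, if_neg ho, hd1, hd2]
    push_cast [hΓ]
    field_simp
    ring
  · -- i = 2k+1 odd, i+1 even
    subst hk
    have ho : ¬ Even (2 * k + 1) := by simp [Nat.even_add_one, parity_simps]
    have he : Even (2 * k + 1 + 1) := by refine ⟨k+1, by omega⟩
    have hd1 : (2 * k + 1) / 2 = k := by omega
    have hd2 : (2 * k + 1 + 1) / 2 = k + 1 := by omega
    unfold gammaMu lamK thetaFn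
    rw [if_pos he, if_neg ho, if_pos he, hd1, hd2]
    rw [Nat.factorial_succ]
    push_cast
    rw [show ((k:ℝ) + 1) + μ + 1/2 = (k:ℝ) + μ + 3/2 by ring]
    field_simp
    ring

section Sums

lemma abs_tsum_le' {f : ℕ → ℝ} (h : Summable fun i => |f i|) :
    |∑' i, f i| ≤ ∑' i, |f i| := by
  have := norm_tsum_le_tsum_norm (f := f) (by simpa [Real.norm_eq_abs] using h)
  simpa [Real.norm_eq_abs] using this

lemma summable_E {μ : ℝ} (hμ : 0 ≤ μ) {y : ℝ} (hy : 0 ≤ y) :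
    Summable (fun i : ℕ => y ^ i / gammaMu μ i) := by
  apply summable_of_ratio_norm_eventually_le (r := 1/2) (by norm_num)
  filter_upwards [Filter.eventually_ge_atTop (⌈2*y⌉₊)] with n hn
  have hg := gammaMu_pos μ hμ
  have hterm : ∀ m : ℕ, ‖y ^ m / gammaMu μ m‖ = y ^ m / gammaMu μ m := by
    intro m
    have := hg m
    rw [Real.norm_eq_abs, abs_of_nonneg (by positivity)]
  rw [hterm, hterm]
  have hl : (0:ℝ) < lamK μ (n+1) := by
    have := lamK_ge μ hμ (n+1); push_cast at this ⊢; linarith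
  have hy2 : 2 * y ≤ lamK μ (n+1) := by
    have h1 : (2*y : ℝ) ≤ (n : ℝ) + 1 := by
      have h2 := Nat.le_ceil (2*y)
      have hnn : ((⌈2*y⌉₊ : ℕ) : ℝ) ≤ (n : ℝ) := by exact_mod_cast hn
      linarith
    have := lamK_ge μ hμ (n+1); push_cast at this; linarith
  rw [gammaMu_succ μ hμ n, pow_succ]
  have hgn1 := hg n
  rw [div_le_iff₀ (by positivity)]
  have key : y ^ n * y * 2 ≤ y ^ n * lamK μ (n+1) := by
    have : y * 2 ≤ lamK μ (n+1) := by linarith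
    have hyn : (0:ℝ) ≤ y ^ n := by positivity
    nlinarith
  have h2 : 1/2 * (y ^ n / gammaMu μ n) * (gammaMu μ n * lamK μ (n+1))
      = y ^ n * lamK μ (n+1) / 2 := by
    field_simp [(hg n).ne']
  rw [h2]
  linarith

lemma one_le_E {μ : ℝ} (hμ : 0 ≤ μ) {y : ℝ} (hy : 0 ≤ y) :
    1 ≤ ∑' i : ℕ, y ^ i / gammaMu μ i := by
  have hg := gammaMu_pos μ hμ
  have h0 : y ^ 0 / gammaMu μ 0 = 1 := by
    rw [gammaMu_zero μ hμ]; norm_num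
  calc (1:ℝ) = y ^ 0 / gammaMu μ 0 := h0.symm
    _ ≤ ∑' i : ℕ, y ^ i / gammaMu μ i :=
        Summable.le_tsum (summable_E hμ hy) 0 (fun i _ => by have := hg i; positivity)

lemma g1_succ {μ : ℝ} (hμ : 0 ≤ μ) {y : ℝ} (i : ℕ) :
    lamK μ (i+1) * (y ^ (i+1) / gammaMu μ (i+1)) = y * (y ^ i / gammaMu μ i) := by
  have hg := gammaMu_pos μ hμ
  have hl : (0:ℝ) < lamK μ (i+1) := by
    have := lamK_ge μ hμ (i+1); push_cast at this; linarith
  rw [gammaMu_succ μ hμ i, pow_succ]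
  field_simp [(hg i).ne', hl.ne']

lemma summable_g1 {μ : ℝ} (hμ : 0 ≤ μ) {y : ℝ} (hy : 0 ≤ y) :
    Summable (fun i : ℕ => lamK μ i * (y ^ i / gammaMu μ i)) := by
  rw [← summable_nat_add_iff 1]
  exact Summable.congr ((summable_E hμ hy).mul_left y) (fun i => (g1_succ hμ i).symm)

lemma tsum_g1 {μ : ℝ} (hμ : 0 ≤ μ) {y : ℝ} (hy : 0 ≤ y) :
    ∑' i : ℕ, lamK μ i * (y ^ i / gammaMu μ i) = y * ∑' i : ℕ, y ^ i / gammaMu μ i := by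
  rw [Summable.tsum_eq_zero_add (summable_g1 hμ hy)]
  simp only [lamK_zero, zero_mul, zero_add]
  rw [tsum_congr (fun i => g1_succ hμ (y := y) i), tsum_mul_left]

lemma g2_succ {μ : ℝ} (hμ : 0 ≤ μ) {y : ℝ} (i : ℕ) :
    lamK μ (i+2) * lamK μ (i+1) * (y ^ (i+2) / gammaMu μ (i+2))
      = y ^ 2 * (y ^ i / gammaMu μ i) := by
  have hg := gammaMu_pos μ hμ
  have hl1 : (0:ℝ) < lamK μ (i+1) := by
    have := lamK_ge μ hμ (i+1); push_cast at this; linarith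
  have hl2 : (0:ℝ) < lamK μ (i+2) := by
    have := lamK_ge μ hμ (i+2); push_cast at this; linarith
  rw [gammaMu_succ μ hμ (i+1), gammaMu_succ μ hμ i]
  rw [show i + 1 + 1 = i + 2 from rfl]
  field_simp [(hg i).ne', hl1.ne', hl2.ne']
  ring

lemma summable_g2 {μ : ℝ} (hμ : 0 ≤ μ) {y : ℝ} (hy : 0 ≤ y) :
    Summable (fun i : ℕ => lamK μ i * lamK μ (i-1) * (y ^ i / gammaMu μ i)) := by
  rw [← summable_nat_add_iff 2]
  refine Summable.congr (((summable_E hμ hy).mul_left (y^2))) (fun i => ?_)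
  exact (g2_succ hμ (y := y) i).symm

lemma tsum_g2 {μ : ℝ} (hμ : 0 ≤ μ) {y : ℝ} (hy : 0 ≤ y) :
    ∑' i : ℕ, lamK μ i * lamK μ (i-1) * (y ^ i / gammaMu μ i)
      = y ^ 2 * ∑' i : ℕ, y ^ i / gammaMu μ i := by
  have hs := summable_g2 hμ hy
  rw [Summable.tsum_eq_zero_add hs]
  rw [Summable.tsum_eq_zero_add ((summable_nat_add_iff 1).mpr hs)]
  simp only [lamK_zero, zero_mul, mul_zero, zero_add]
  have h1 : lamK μ 1 * lamK μ (1-1) * (y ^ 1 / gammaMu μ 1) = 0 := by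
    simp [lamK_zero]
  rw [h1, zero_add]
  have : ∀ i : ℕ, lamK μ (i+1+1) * lamK μ (i+1+1-1) * (y ^ (i+1+1) / gammaMu μ (i+1+1))
      = y ^ 2 * (y ^ i / gammaMu μ i) := fun i => g2_succ hμ i
  rw [tsum_congr this, tsum_mul_left]

lemma lam_diff {μ : ℝ} (hμ : 0 ≤ μ) (i : ℕ) : |lamK μ (i+1) - lamK μ i| ≤ 1 + 2*μ := by
  rcases Nat.even_or_odd i with he | ho
  · have h1 : ¬ Even (i+1) := by simp [Nat.even_add_one, he]
    rw [show lamK μ (i+1) - lamK μ i = 1 + 2*μ by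
      unfold lamK thetaFn; rw [if_pos he, if_neg h1]; push_cast; ring]
    rw [abs_of_nonneg (by linarith)]
  · have h1 : Even (i+1) := Odd.add_one ho
    have h2 : ¬ Even i := Nat.not_even_iff_odd.mpr ho
    rw [show lamK μ (i+1) - lamK μ i = 1 - 2*μ by
      unfold lamK thetaFn; rw [if_pos h1, if_neg h2]; push_cast; ring]
    rw [abs_le]; constructor <;> linarith

lemma lam_diff' {μ : ℝ} (hμ : 0 ≤ μ) (i : ℕ) : |lamK μ i - lamK μ (i-1)| ≤ 1 + 2*μ := by
  cases i with
  | zero => simp [lamK_zero]; linarith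
  | succ n => exact lam_diff hμ n

/-- the error series g_err i = λ_i (λ_i - λ_{i-1}) w_i -/
lemma summable_gerr {μ : ℝ} (hμ : 0 ≤ μ) {y : ℝ} (hy : 0 ≤ y) :
    Summable (fun i : ℕ => lamK μ i * (lamK μ i - lamK μ (i-1)) * (y ^ i / gammaMu μ i)) := by
  have hg := gammaMu_pos μ hμ
  rw [← summable_abs_iff]
  refine Summable.of_nonneg_of_le (fun i => abs_nonneg _) (fun i => ?_)
    (((summable_g1 hμ hy)).mul_left (1 + 2*μ))
  have h1 : 0 ≤ lamK μ i := lamK_nonneg μ hμ i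
  have hgi := hg i
  have h2 : 0 ≤ y ^ i / gammaMu μ i := by positivity
  rw [abs_mul, abs_mul, abs_of_nonneg h1, abs_of_nonneg h2]
  have hld := lam_diff' hμ (μ := μ) i
  calc lamK μ i * |lamK μ i - lamK μ (i-1)| * (y ^ i / gammaMu μ i)
      ≤ lamK μ i * (1 + 2*μ) * (y ^ i / gammaMu μ i) :=
        mul_le_mul_of_nonneg_right (mul_le_mul_of_nonneg_left hld h1) h2
    _ = (1 + 2*μ) * (lamK μ i * (y ^ i / gammaMu μ i)) := by ring

lemma abs_tsum_gerr {μ : ℝ} (hμ : 0 ≤ μ) {y : ℝ} (hy : 0 ≤ y) :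
    |∑' i : ℕ, lamK μ i * (lamK μ i - lamK μ (i-1)) * (y ^ i / gammaMu μ i)|
      ≤ (1 + 2*μ) * (y * ∑' i : ℕ, y ^ i / gammaMu μ i) := by
  have hg := gammaMu_pos μ hμ
  calc |∑' i : ℕ, lamK μ i * (lamK μ i - lamK μ (i-1)) * (y ^ i / gammaMu μ i)|
      ≤ ∑' i : ℕ, |lamK μ i * (lamK μ i - lamK μ (i-1)) * (y ^ i / gammaMu μ i)| := by
        exact abs_tsum_le' ((summable_abs_iff).mpr (summable_gerr hμ hy))
    _ ≤ ∑' i : ℕ, (1 + 2*μ) * (lamK μ i * (y ^ i / gammaMu μ i)) := by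
        refine Summable.tsum_le_tsum (fun i => ?_) ((summable_abs_iff).mpr (summable_gerr hμ hy))
          ((summable_g1 hμ hy).mul_left _)
        have h1 : 0 ≤ lamK μ i := lamK_nonneg μ hμ i
        have hgi := hg i
        have h2 : 0 ≤ y ^ i / gammaMu μ i := by positivity
        rw [abs_mul, abs_mul, abs_of_nonneg h1, abs_of_nonneg h2]
        have hld := lam_diff' hμ (μ := μ) i
        calc lamK μ i * |lamK μ i - lamK μ (i-1)| * (y ^ i / gammaMu μ i)
            ≤ lamK μ i * (1 + 2*μ) * (y ^ i / gammaMu μ i) :=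
              mul_le_mul_of_nonneg_right (mul_le_mul_of_nonneg_left hld h1) h2
          _ = (1 + 2*μ) * (lamK μ i * (y ^ i / gammaMu μ i)) := by ring
    _ = (1 + 2*μ) * (y * ∑' i : ℕ, y ^ i / gammaMu μ i) := by
        rw [tsum_mul_left, tsum_g1 hμ hy]

/-- central second moment of the Dunkl exponential weights -/
lemma summable_central {μ : ℝ} (hμ : 0 ≤ μ) {y : ℝ} (hy : 0 ≤ y) :
    Summable (fun i : ℕ => (lamK μ i - y)^2 * (y ^ i / gammaMu μ i)) := by
  have hkey : ∀ i : ℕ, (lamK μ i - y)^2 * (y ^ i / gammaMu μ i)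
      = lamK μ i * lamK μ (i-1) * (y ^ i / gammaMu μ i)
        + lamK μ i * (lamK μ i - lamK μ (i-1)) * (y ^ i / gammaMu μ i)
        - 2*y * (lamK μ i * (y ^ i / gammaMu μ i))
        + y^2 * (y ^ i / gammaMu μ i) := fun i => by ring
  refine Summable.congr ?_ (fun i => (hkey i).symm)
  exact ((((summable_g2 hμ hy).add (summable_gerr hμ hy)).sub
    ((summable_g1 hμ hy).mul_left (2*y))).add ((summable_E hμ hy).mul_left (y^2)))

lemma tsum_central_le {μ : ℝ} (hμ : 0 ≤ μ) {y : ℝ} (hy : 0 ≤ y) :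
    ∑' i : ℕ, (lamK μ i - y)^2 * (y ^ i / gammaMu μ i)
      ≤ (1 + 2*μ) * y * ∑' i : ℕ, y ^ i / gammaMu μ i := by
  have hkey : ∀ i : ℕ, (lamK μ i - y)^2 * (y ^ i / gammaMu μ i)
      = lamK μ i * lamK μ (i-1) * (y ^ i / gammaMu μ i)
        + lamK μ i * (lamK μ i - lamK μ (i-1)) * (y ^ i / gammaMu μ i)
        - 2*y * (lamK μ i * (y ^ i / gammaMu μ i))
        + y^2 * (y ^ i / gammaMu μ i) := fun i => by ring
  rw [tsum_congr hkey]
  rw [Summable.tsum_add (((summable_g2 hμ hy).add (summable_gerr hμ hy)).sub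
      ((summable_g1 hμ hy).mul_left (2*y))) ((summable_E hμ hy).mul_left (y^2))]
  rw [Summable.tsum_sub ((summable_g2 hμ hy).add (summable_gerr hμ hy))
      ((summable_g1 hμ hy).mul_left (2*y))]
  rw [Summable.tsum_add (summable_g2 hμ hy) (summable_gerr hμ hy)]
  rw [tsum_mul_left, tsum_mul_left, tsum_g1 hμ hy, tsum_g2 hμ hy]
  have := abs_tsum_gerr hμ hy
  have h1 := abs_le.mp this
  set E := ∑' i : ℕ, y ^ i / gammaMu μ i
  nlinarith [h1.2]

end Sums


section Coef

lemma lam_add (μ : ℝ) (j k : ℕ) :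
    lamK μ (j + k) = lamK μ j + lamK μ k - 4*μ*(thetaFn j * thetaFn k) := by
  rcases Nat.even_or_odd j with hj | hj <;> rcases Nat.even_or_odd k with hk | hk
  · have h : Even (j + k) := hj.add hk
    unfold lamK thetaFn
    rw [if_pos h, if_pos hj, if_pos hk]; push_cast; ring
  · have h : ¬ Even (j + k) := by
      simp [Nat.even_add, hj, Nat.not_even_iff_odd.mpr hk]
    have hk' : ¬ Even k := Nat.not_even_iff_odd.mpr hk
    unfold lamK thetaFn
    rw [if_neg h, if_pos hj, if_neg hk']; push_cast; ring
  · have h : ¬ Even (j + k) := by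
      simp [Nat.even_add, hk, Nat.not_even_iff_odd.mpr hj]
    have hj' : ¬ Even j := Nat.not_even_iff_odd.mpr hj
    unfold lamK thetaFn
    rw [if_neg h, if_neg hj', if_pos hk]; push_cast; ring
  · have h : Even (j + k) := hj.add_odd hk
    have hj' : ¬ Even j := Nat.not_even_iff_odd.mpr hj
    have hk' : ¬ Even k := Nat.not_even_iff_odd.mpr hk
    unfold lamK thetaFn
    rw [if_pos h, if_neg hj', if_neg hk']; push_cast; ring

lemma lam_sq_bound {μ : ℝ} (hμ : 0 ≤ μ) (y : ℝ) (j k : ℕ) :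
    (lamK μ (j + k) - y)^2 ≤ 2*(lamK μ j - y)^2 + 2*(lamK μ k + 4*μ)^2 := by
  rw [lam_add μ j k]
  set a := lamK μ j - y with ha
  set b := lamK μ k - 4*μ*(thetaFn j * thetaFn k) with hb
  have h1 : lamK μ j + lamK μ k - 4*μ*(thetaFn j*thetaFn k) - y = a + b := by ring
  rw [h1]
  have hbb : b^2 ≤ (lamK μ k + 4*μ)^2 := by
    have h0 : 0 ≤ thetaFn j * thetaFn k := mul_nonneg (thetaFn_nonneg j) (thetaFn_nonneg k)
    have h2 : thetaFn j * thetaFn k ≤ 1 :=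
      mul_le_one₀ (thetaFn_le_one j) (thetaFn_nonneg k) (thetaFn_le_one k)
    have hlk := lamK_nonneg μ hμ k
    apply sq_le_sq'
    · rw [hb]; nlinarith
    · rw [hb]; nlinarith
  nlinarith [sq_nonneg (a - b)]

lemma summable_absc {μ : ℝ} (hμ : 0 ≤ μ) {c : ℕ → ℝ}
    (hQ : Summable fun i : ℕ => |c i * 1 ^ i / gammaMu μ i|) :
    Summable fun k : ℕ => |c k| / gammaMu μ k := by
  refine Summable.congr hQ (fun k => ?_)
  have hg := gammaMu_pos μ hμ k
  rw [one_pow, mul_one, abs_div, abs_of_pos hg]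

lemma summable_c2 {μ : ℝ} (hμ : 0 ≤ μ) {c : ℕ → ℝ}
    (hQ : Summable fun i : ℕ => |c i * 4 ^ i / gammaMu μ i|) :
    Summable fun k : ℕ => (lamK μ k + 4*μ)^2 * (|c k| / gammaMu μ k) := by
  refine Summable.of_nonneg_of_le (fun k => ?_) (fun k => ?_)
    (hQ.mul_left (4*(1+6*μ)^2))
  · have hg := gammaMu_pos μ hμ k
    have := lamK_nonneg μ hμ k
    positivity
  · have hg := gammaMu_pos μ hμ k
    have h1 : lamK μ k + 4*μ ≤ ((k:ℝ)+1)*(1+6*μ) := by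
      have := lamK_le μ hμ k
      nlinarith [Nat.cast_nonneg (α := ℝ) k]
    have h1' : 0 ≤ lamK μ k + 4*μ := by
      have := lamK_nonneg μ hμ k; linarith
    have h2 : ((k:ℝ)+1) ≤ 2^(k+1) := by
      exact_mod_cast (Nat.lt_two_pow_self (n := k+1)).le
    have h3 : (((k:ℝ)+1)*(1+6*μ))^2 ≤ (2^(k+1))^2*(1+6*μ)^2 := by
      have h4 : ((k:ℝ)+1)^2 ≤ (2^(k+1))^2 := by
        apply sq_le_sq' <;> nlinarith [Nat.cast_nonneg (α := ℝ) k]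
      nlinarith [sq_nonneg (1+6*μ)]
    have h5 : ((2:ℝ)^(k+1))^2 = 4*4^k := by
      rw [← pow_mul]
      have : (k+1)*2 = 2*k+2 := by ring
      rw [this, pow_add, pow_mul]
      norm_num
      ring
    have h6 : (lamK μ k + 4*μ)^2 ≤ 4*(1+6*μ)^2*4^k := by
      calc (lamK μ k + 4*μ)^2 ≤ (((k:ℝ)+1)*(1+6*μ))^2 := by
            apply sq_le_sq' <;> nlinarith [Nat.cast_nonneg (α := ℝ) k]
        _ ≤ (2^(k+1))^2*(1+6*μ)^2 := h3
        _ = 4*(1+6*μ)^2*4^k := by rw [h5]; ring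
    have habs : |c k * 4 ^ k / gammaMu μ k| = 4^k * |c k| / gammaMu μ k := by
      rw [abs_div, abs_of_pos hg, abs_mul]
      rw [abs_of_nonneg (by positivity : (0:ℝ) ≤ (4:ℝ)^k)]
      ring_nf
    rw [habs]
    have hck : 0 ≤ |c k| / gammaMu μ k := by positivity
    calc (lamK μ k + 4*μ)^2 * (|c k| / gammaMu μ k)
        ≤ (4*(1+6*μ)^2*4^k) * (|c k| / gammaMu μ k) :=
          mul_le_mul_of_nonneg_right h6 hck
      _ = 4*(1+6*μ)^2 * (4^k * |c k| / gammaMu μ k) := by ring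

lemma qPoly_div {μ : ℝ} (hμ : 0 ≤ μ) (c : ℕ → ℝ) (i : ℕ) (y : ℝ) :
    qPoly μ c i y / gammaMu μ i
      = ∑ j ∈ Finset.range (i + 1), (y^j / gammaMu μ j) * (c (i-j) / gammaMu μ (i-j)) := by
  unfold qPoly
  rw [Finset.sum_div]
  refine Finset.sum_congr rfl (fun j _ => ?_)
  have h1 := (gammaMu_pos μ hμ i).ne'
  have h2 := (gammaMu_pos μ hμ j).ne'
  have h3 := (gammaMu_pos μ hμ (i-j)).ne'
  field_simp

end Coef

section Key

variable {μ : ℝ} {c : ℕ → ℝ}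

/-- norm summability of the weights u(j) = y^j/γ j -/
lemma normsum_u (hμ : 0 ≤ μ) {y : ℝ} (hy : 0 ≤ y) :
    Summable fun j : ℕ => ‖y ^ j / gammaMu μ j‖ := by
  refine Summable.congr (summable_E hμ hy) (fun j => ?_)
  have hg := gammaMu_pos μ hμ j
  rw [Real.norm_eq_abs, abs_of_nonneg (by positivity)]

lemma normsum_v (hμ : 0 ≤ μ) (hQ1 : Summable fun i : ℕ => |c i * 1 ^ i / gammaMu μ i|) :
    Summable fun k : ℕ => ‖c k / gammaMu μ k‖ := by
  refine Summable.congr (summable_absc hμ hQ1) (fun k => ?_)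
  have hg := gammaMu_pos μ hμ k
  rw [Real.norm_eq_abs, abs_div, abs_of_pos hg]

/-- Key A: the partition-of-unity identity. -/
lemma summable_w (hμ : 0 ≤ μ) (hQ1 : Summable fun i : ℕ => |c i * 1 ^ i / gammaMu μ i|)
    {y : ℝ} (hy : 0 ≤ y) :
    Summable fun i : ℕ => qPoly μ c i y / gammaMu μ i := by
  have h := summable_sum_mul_range_of_summable_norm' (normsum_u hμ hy)
    (normsum_u hμ hy).of_norm (normsum_v hμ hQ1) (normsum_v hμ hQ1).of_norm
  exact Summable.congr h (fun i => (qPoly_div hμ c i y).symm)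

lemma tsum_w (hμ : 0 ≤ μ) (hQ1 : Summable fun i : ℕ => |c i * 1 ^ i / gammaMu μ i|)
    {y : ℝ} (hy : 0 ≤ y) :
    ∑' i : ℕ, qPoly μ c i y / gammaMu μ i
      = (∑' i : ℕ, y ^ i / gammaMu μ i) * Qf μ c 1 := by
  have h := tsum_mul_tsum_eq_tsum_sum_range_of_summable_norm
    (normsum_u hμ hy) (normsum_v hμ hQ1)
  rw [tsum_congr (fun i => qPoly_div hμ c i y), ← h]
  congr 1
  unfold Qf
  exact tsum_congr (fun i => by rw [one_pow, mul_one])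

/-- Key B: the second central moment bound. -/
lemma summable_G (hμ : 0 ≤ μ)
    (hQ1 : Summable fun i : ℕ => |c i * 1 ^ i / gammaMu μ i|)
    (hQ4 : Summable fun i : ℕ => |c i * 4 ^ i / gammaMu μ i|)
    (hq : ∀ i : ℕ, ∀ x : ℝ, 0 ≤ x → 0 ≤ qPoly μ c i x)
    {y : ℝ} (hy : 0 ≤ y) :
    Summable (fun i : ℕ => (lamK μ i - y)^2 * (qPoly μ c i y / gammaMu μ i))
    ∧ ∑' i : ℕ, (lamK μ i - y)^2 * (qPoly μ c i y / gammaMu μ i)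
      ≤ (2*((1+2*μ)*y*(∑' i : ℕ, y ^ i / gammaMu μ i))) * (∑' k : ℕ, |c k| / gammaMu μ k)
        + (2*(∑' i : ℕ, y ^ i / gammaMu μ i)) * (∑' k : ℕ, (lamK μ k + 4*μ)^2 * (|c k| / gammaMu μ k)) := by
  -- the majorizing Cauchy-product series
  set u1 : ℕ → ℝ := fun j => (lamK μ j - y)^2 * (y^j / gammaMu μ j) with hu1
  set v1 : ℕ → ℝ := fun k => |c k| / gammaMu μ k with hv1
  set u2 : ℕ → ℝ := fun j => y^j / gammaMu μ j with hu2
  set v2 : ℕ → ℝ := fun k => (lamK μ k + 4*μ)^2 * (|c k| / gammaMu μ k) with hv2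
  have hu1s : Summable u1 := summable_central hμ hy
  have hv1s : Summable v1 := summable_absc hμ hQ1
  have hu2s : Summable u2 := summable_E hμ hy
  have hv2s : Summable v2 := summable_c2 hμ hQ4
  have hu1n : Summable fun j => ‖u1 j‖ := by
    refine Summable.congr hu1s (fun j => ?_)
    have hg := gammaMu_pos μ hμ j
    rw [Real.norm_eq_abs, abs_of_nonneg (by positivity)]
  have hv1n : Summable fun k => ‖v1 k‖ := by
    refine Summable.congr hv1s (fun k => ?_)
    have hg := gammaMu_pos μ hμ k
    rw [Real.norm_eq_abs, abs_of_nonneg (by positivity)]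
  have hu2n : Summable fun j => ‖u2 j‖ := normsum_u hμ hy
  have hv2n : Summable fun k => ‖v2 k‖ := by
    refine Summable.congr hv2s (fun k => ?_)
    have hg := gammaMu_pos μ hμ k
    have := lamK_nonneg μ hμ k
    rw [Real.norm_eq_abs, abs_of_nonneg (by positivity)]
  have hGH : ∀ n : ℕ, (lamK μ n - y)^2 * (qPoly μ c n y / gammaMu μ n)
      ≤ 2 * (∑ j ∈ Finset.range (n+1), u1 j * v1 (n-j))
        + 2 * (∑ j ∈ Finset.range (n+1), u2 j * v2 (n-j)) := by
    intro n
    rw [qPoly_div hμ c n y, Finset.mul_sum]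
    calc ∑ j ∈ Finset.range (n+1),
          (lamK μ n - y)^2 * (y^j / gammaMu μ j * (c (n-j) / gammaMu μ (n-j)))
        ≤ ∑ j ∈ Finset.range (n+1), (2 * (u1 j * v1 (n-j)) + 2 * (u2 j * v2 (n-j))) := by
          refine Finset.sum_le_sum (fun j hj => ?_)
          have hjle : j ≤ n := by
            have := Finset.mem_range.mp hj; omega
          have hjn : j + (n - j) = n := by omega
          have hsq : (lamK μ n - y)^2 ≤ 2*(lamK μ j - y)^2 + 2*(lamK μ (n-j) + 4*μ)^2 := by
            conv_lhs => rw [← hjn]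
            exact lam_sq_bound hμ y j (n-j)
          have hgj := gammaMu_pos μ hμ j
          have hgnj := gammaMu_pos μ hμ (n-j)
          have hu2j : (0:ℝ) ≤ y^j / gammaMu μ j := by positivity
          have hv1j : (0:ℝ) ≤ |c (n-j)| / gammaMu μ (n-j) := by positivity
          have hsq0 : (0:ℝ) ≤ (lamK μ n - y)^2 := sq_nonneg _
          have hc1 : c (n-j) / gammaMu μ (n-j) ≤ |c (n-j)| / gammaMu μ (n-j) :=
            div_le_div_of_nonneg_right (le_abs_self _) hgnj.le
          have step1 : (lamK μ n - y)^2 * (y^j / gammaMu μ j * (c (n-j) / gammaMu μ (n-j)))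
              ≤ (lamK μ n - y)^2 * (y^j / gammaMu μ j * (|c (n-j)| / gammaMu μ (n-j))) :=
            mul_le_mul_of_nonneg_left (mul_le_mul_of_nonneg_left hc1 hu2j) hsq0
          have step2 : (lamK μ n - y)^2 * (y^j / gammaMu μ j * (|c (n-j)| / gammaMu μ (n-j)))
              ≤ (2*(lamK μ j - y)^2 + 2*(lamK μ (n-j) + 4*μ)^2)
                * (y^j / gammaMu μ j * (|c (n-j)| / gammaMu μ (n-j))) :=
            mul_le_mul_of_nonneg_right hsq (mul_nonneg hu2j hv1j)
          have step3 : (2*(lamK μ j - y)^2 + 2*(lamK μ (n-j) + 4*μ)^2)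
                * (y^j / gammaMu μ j * (|c (n-j)| / gammaMu μ (n-j)))
              = 2 * (u1 j * v1 (n-j)) + 2 * (u2 j * v2 (n-j)) := by
            simp only [hu1, hv1, hu2, hv2]
            ring
          linarith
      _ = 2 * (∑ j ∈ Finset.range (n+1), u1 j * v1 (n-j))
            + 2 * (∑ j ∈ Finset.range (n+1), u2 j * v2 (n-j)) := by
          rw [Finset.sum_add_distrib, ← Finset.mul_sum, ← Finset.mul_sum]
  have hHs : Summable (fun n : ℕ =>
      2 * (∑ j ∈ Finset.range (n+1), u1 j * v1 (n-j))
        + 2 * (∑ j ∈ Finset.range (n+1), u2 j * v2 (n-j))) :=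
    ((summable_sum_mul_range_of_summable_norm' hu1n hu1s hv1n hv1s).mul_left 2).add
      ((summable_sum_mul_range_of_summable_norm' hu2n hu2s hv2n hv2s).mul_left 2)
  have hG0 : ∀ n : ℕ, 0 ≤ (lamK μ n - y)^2 * (qPoly μ c n y / gammaMu μ n) := by
    intro n
    have hg := gammaMu_pos μ hμ n
    have := hq n y hy
    positivity
  have hGs : Summable (fun i : ℕ => (lamK μ i - y)^2 * (qPoly μ c i y / gammaMu μ i)) :=
    Summable.of_nonneg_of_le hG0 hGH hHs
  refine ⟨hGs, ?_⟩
  have h1 : ∑' i : ℕ, (lamK μ i - y)^2 * (qPoly μ c i y / gammaMu μ i)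
      ≤ ∑' n : ℕ, (2 * (∑ j ∈ Finset.range (n+1), u1 j * v1 (n-j))
        + 2 * (∑ j ∈ Finset.range (n+1), u2 j * v2 (n-j))) :=
    Summable.tsum_le_tsum hGH hGs hHs
  have h2 : ∑' n : ℕ, (2 * (∑ j ∈ Finset.range (n+1), u1 j * v1 (n-j))
        + 2 * (∑ j ∈ Finset.range (n+1), u2 j * v2 (n-j)))
      = 2 * ((∑' j, u1 j) * (∑' k, v1 k)) + 2 * ((∑' j, u2 j) * (∑' k, v2 k)) := by
    rw [Summable.tsum_add ((summable_sum_mul_range_of_summable_norm' hu1n hu1s hv1n hv1s).mul_left 2)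
      ((summable_sum_mul_range_of_summable_norm' hu2n hu2s hv2n hv2s).mul_left 2)]
    rw [tsum_mul_left, tsum_mul_left,
      ← tsum_mul_tsum_eq_tsum_sum_range_of_summable_norm hu1n hv1n,
      ← tsum_mul_tsum_eq_tsum_sum_range_of_summable_norm hu2n hv2n]
  rw [h2] at h1
  refine h1.trans ?_
  have h3 : (∑' j, u1 j) ≤ (1+2*μ)*y*(∑' i : ℕ, y ^ i / gammaMu μ i) := tsum_central_le hμ hy
  have hv1nn : 0 ≤ ∑' k, v1 k := tsum_nonneg (fun k => by
    have hg := gammaMu_pos μ hμ k; positivity)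
  have hv2nn : 0 ≤ ∑' k, v2 k := tsum_nonneg (fun k => by
    have hg := gammaMu_pos μ hμ k
    have := lamK_nonneg μ hμ k
    positivity)
  calc 2 * ((∑' j, u1 j) * (∑' k, v1 k)) + 2 * ((∑' j, u2 j) * (∑' k, v2 k))
      ≤ 2 * ((1+2*μ)*y*(∑' i : ℕ, y ^ i / gammaMu μ i) * (∑' k, v1 k))
        + 2 * ((∑' i : ℕ, y ^ i / gammaMu μ i) * (∑' k, v2 k)) := by
        have := mul_le_mul_of_nonneg_right h3 hv1nn
        linarith
    _ = (2*((1+2*μ)*y*(∑' i : ℕ, y ^ i / gammaMu μ i))) * (∑' k, v1 k)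
        + (2*(∑' i : ℕ, y ^ i / gammaMu μ i)) * (∑' k, v2 k) := by ring

end Key

section Majorant

/-- growth bound: f continuous on [0,∞) with f/(1+x²) → A is dominated by C(1+t²). -/
lemma growth_bound {f : ℝ → ℝ} (hf : ContinuousOn f (Set.Ici 0))
    {A : ℝ} (hfA : Filter.Tendsto (fun x => f x / (1 + x ^ 2)) Filter.atTop (nhds A)) :
    ∃ C : ℝ, 1 ≤ C ∧ ∀ t : ℝ, 0 ≤ t → |f t| ≤ C * (1 + t^2) := by
  have h1 : ∀ᶠ x in Filter.atTop, |f x / (1 + x ^ 2) - A| < 1 := by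
    have := Metric.tendsto_nhds.mp hfA 1 one_pos
    simpa [Real.dist_eq] using this
  obtain ⟨R, hR⟩ := Filter.eventually_atTop.mp h1
  set R0 : ℝ := max R 0 with hR0
  have hcomp : IsCompact (Set.Icc (0:ℝ) R0) := isCompact_Icc
  obtain ⟨C0, hC0⟩ := hcomp.exists_bound_of_continuousOn
    (hf.mono (fun x hx => hx.1))
  refine ⟨max (C0 + 1) (|A| + 1), le_trans (by norm_num : (1:ℝ) ≤ |A| + 1) (le_max_right _ _), ?_⟩
  intro t ht
  rcases le_or_gt t R0 with h | h
  · have := hC0 t ⟨ht, h⟩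
    rw [Real.norm_eq_abs] at this
    have h2 : C0 + 1 ≤ max (C0 + 1) (|A| + 1) := le_max_left _ _
    nlinarith [sq_nonneg t, abs_nonneg (f t)]
  · have hR' : R ≤ t := le_trans (le_max_left R 0) h.le
    have h2 := hR t hR'
    have hpos : (0:ℝ) < 1 + t^2 := by positivity
    have h3 : |f t| ≤ (|A| + 1) * (1 + t^2) := by
      have h4 : |f t / (1 + t^2)| ≤ |A| + 1 := by
        have := abs_sub_abs_le_abs_sub (f t / (1 + t^2)) A
        linarith [h2, abs_nonneg A]
      rw [abs_div, abs_of_pos hpos] at h4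
      calc |f t| = |f t| / (1 + t^2) * (1 + t^2) := by field_simp
        _ ≤ (|A| + 1) * (1 + t^2) := mul_le_mul_of_nonneg_right h4 hpos.le
    have h5 : (|A| + 1) ≤ max (C0 + 1) (|A| + 1) := le_max_right _ _
    nlinarith [sq_nonneg t]

lemma majorant {f : ℝ → ℝ} (hf : ContinuousOn f (Set.Ici 0))
    {A : ℝ} (hfA : Filter.Tendsto (fun x => f x / (1 + x ^ 2)) Filter.atTop (nhds A))
    {p q : ℝ} (hp : 0 ≤ p) (hpq : p < q) {ε : ℝ} (hε : 0 < ε) :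
    ∃ M : ℝ, 0 ≤ M ∧ ∀ x ∈ Set.Icc p q, ∀ t : ℝ, 0 ≤ t →
      |f t - f x| ≤ ε + M * (t - x)^2 := by
  obtain ⟨C, hC1, hC⟩ := growth_bound hf hfA
  have hq0 : 0 ≤ q := le_trans hp hpq.le
  -- uniform continuity on [0, q+1]
  have hUC : UniformContinuousOn f (Set.Icc 0 (q+1)) :=
    isCompact_Icc.uniformContinuousOn_of_continuous
      (hf.mono (fun x hx => hx.1))
  rw [Metric.uniformContinuousOn_iff] at hUC
  obtain ⟨δ0, hδ0, hδ⟩ := hUC ε hε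
  set δ : ℝ := min δ0 1 with hδdef
  have hδpos : 0 < δ := lt_min hδ0 one_pos
  have hδ1 : δ ≤ 1 := min_le_right _ _
  refine ⟨C * (2 + 3*q^2) / δ^2 + 2*C, by positivity, ?_⟩
  intro x hx t ht
  have hx0 : 0 ≤ x := le_trans hp hx.1
  have hxq : x ≤ q := hx.2
  rcases lt_or_ge (|t - x|) δ with hcase | hcase
  · -- close: uniform continuity
    have htmem : t ∈ Set.Icc (0:ℝ) (q+1) := by
      constructor
      · exact ht
      · have := abs_lt.mp hcase
        linarith
    have hxmem : x ∈ Set.Icc (0:ℝ) (q+1) := ⟨hx0, by linarith⟩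
    have hd : dist t x < δ0 := by
      rw [Real.dist_eq]
      exact lt_of_lt_of_le hcase (min_le_left _ _)
    have := hδ t htmem x hxmem hd
    rw [Real.dist_eq] at this
    have hM : 0 ≤ (C * (2 + 3*q^2) / δ^2 + 2*C) * (t - x)^2 := by positivity
    linarith
  · -- far: growth bound
    have h1 := hC t ht
    have h2 := hC x hx0
    have habs : |f t - f x| ≤ C * (2 + t^2 + x^2) := by
      calc |f t - f x| ≤ |f t| + |f x| := abs_sub _ _
        _ ≤ C * (1 + t^2) + C * (1 + x^2) := add_le_add h1 h2
        _ = C * (2 + t^2 + x^2) := by ring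
    have ht2 : t^2 ≤ 2*x^2 + 2*(t-x)^2 := by nlinarith [sq_nonneg (t - 2*x)]
    have hx2 : x^2 ≤ q^2 := by nlinarith
    have hd2 : δ^2 ≤ (t-x)^2 := by
      have h := mul_self_le_mul_self hδpos.le hcase
      rw [← sq_abs (t-x)]
      nlinarith [h]
    have hkey : C * (2 + 3*q^2) ≤ C * (2 + 3*q^2) / δ^2 * (t-x)^2 := by
      rw [div_mul_eq_mul_div, le_div_iff₀ (by positivity)]
      have hnum : 0 ≤ C * (2 + 3*q^2) := by positivity
      nlinarith
    calc |f t - f x| ≤ C * (2 + t^2 + x^2) := habs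
      _ ≤ C * (2 + 3*q^2) + 2*C*(t-x)^2 := by nlinarith
      _ ≤ C * (2 + 3*q^2) / δ^2 * (t-x)^2 + 2*C*(t-x)^2 := by linarith
      _ = (C * (2 + 3*q^2) / δ^2 + 2*C) * (t-x)^2 := by ring
      _ ≤ ε + (C * (2 + 3*q^2) / δ^2 + 2*C) * (t-x)^2 := by linarith

end Majorant


/-- Korovkin-type uniform convergence of K_n^μ(f;·) to f on compact intervals. -/
theorem Kop_uniform_convergence (μ : ℝ) (hμ : 0 ≤ μ) (c : ℕ → ℝ) (hc0 : c 0 ≠ 0)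
    (hQ : ∀ t : ℝ, Summable fun i : ℕ => |c i * t ^ i / gammaMu μ i|)
    (hq : ∀ i : ℕ, ∀ x : ℝ, 0 ≤ x → 0 ≤ qPoly μ c i x)
    (hQ1 : 0 < Qf μ c 1)
    (f : ℝ → ℝ) (hf : ContinuousOn f (Set.Ici 0))
    (A : ℝ) (hfA : Filter.Tendsto (fun x => f x / (1 + x ^ 2)) Filter.atTop (nhds A))
    (hfs : ∀ n : ℕ, 1 ≤ n → ∀ x : ℝ, 0 ≤ x → Summable fun i : ℕ =>
      |qPoly μ c i (n * x) / gammaMu μ i * f (((i : ℝ) + 2 * μ * thetaFn i) / n)|)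
    (p q : ℝ) (hp : 0 ≤ p) (hpq : p < q) :
    TendstoUniformlyOn (fun n : ℕ => fun x => Kop μ c n f x) f Filter.atTop
      (Set.Icc p q) := by
  classical
  have hq0 : 0 ≤ q := le_trans hp hpq.le
  set La0 : ℝ := ∑' k : ℕ, |c k| / gammaMu μ k with hLa0def
  set La2 : ℝ := ∑' k : ℕ, (lamK μ k + 4*μ)^2 * (|c k| / gammaMu μ k) with hLa2def
  have hLa0nn : 0 ≤ La0 := tsum_nonneg (fun k => by
    have := gammaMu_pos μ hμ k; positivity)
  have hLa2nn : 0 ≤ La2 := tsum_nonneg (fun k => by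
    have h1 := gammaMu_pos μ hμ k
    have h2 := lamK_nonneg μ hμ k
    positivity)
  rw [Metric.tendstoUniformlyOn_iff]
  intro ε hε
  obtain ⟨M, hM0, hM⟩ := majorant hf hfA hp hpq (half_pos hε)
  set B : ℝ := M * (2*(1+2*μ)*q*La0 + 2*La2) / Qf μ c 1 with hBdef
  have hB0 : 0 ≤ B := div_nonneg (by positivity) hQ1.le
  obtain ⟨N0, hN0⟩ := exists_nat_gt (B / (ε/2))
  filter_upwards [Filter.eventually_ge_atTop (max N0 1)] with n hn
  intro x hx
  have hn1 : 1 ≤ n := le_trans (le_max_right N0 1) hn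
  have hnR : (1:ℝ) ≤ (n:ℝ) := by exact_mod_cast hn1
  have hnpos : (0:ℝ) < (n:ℝ) := by linarith
  have hx0 : 0 ≤ x := le_trans hp hx.1
  set y : ℝ := (n:ℝ) * x with hydef
  have hy : 0 ≤ y := by positivity
  set E : ℝ := ∑' i : ℕ, y ^ i / gammaMu μ i with hEdef
  have hE1 : 1 ≤ E := by rw [hEdef]; exact one_le_E hμ hy
  have hE0 : 0 < E := by linarith
  have hQE : 0 < Qf μ c 1 * E := mul_pos hQ1 hE0
  -- the weights
  have hw0 : ∀ i : ℕ, 0 ≤ qPoly μ c i y / gammaMu μ i := fun i => by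
    have h1 := gammaMu_pos μ hμ i
    have h2 := hq i y hy
    positivity
  have sw : Summable (fun i : ℕ => qPoly μ c i y / gammaMu μ i) := summable_w hμ (hQ 1) hy
  have hwsum : ∑' i : ℕ, qPoly μ c i y / gammaMu μ i = E * Qf μ c 1 := by
    rw [hEdef]; exact tsum_w hμ (hQ 1) hy
  obtain ⟨SG, hTG⟩ := summable_G hμ (hQ 1) (hQ 4) hq hy
  rw [← hEdef, ← hLa0def, ← hLa2def] at hTG
  set TG : ℝ := ∑' i : ℕ, (lamK μ i - y)^2 * (qPoly μ c i y / gammaMu μ i) with hTGdef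
  have hTG0 : 0 ≤ TG := tsum_nonneg (fun i => mul_nonneg (sq_nonneg _) (hw0 i))
  -- the f-series
  have sf : Summable (fun i : ℕ =>
      qPoly μ c i y / gammaMu μ i * f (((i:ℝ) + 2*μ*thetaFn i)/(n:ℝ))) :=
    summable_abs_iff.mp (hfs n hn1 x hx0)
  -- difference representation
  have hlam : ∀ i : ℕ, ((i:ℝ) + 2*μ*thetaFn i) = lamK μ i := fun i => rfl
  have hdiff : (∑' i : ℕ, qPoly μ c i y / gammaMu μ i * f (((i:ℝ) + 2*μ*thetaFn i)/(n:ℝ)))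
      - f x * (Qf μ c 1 * E)
      = ∑' i : ℕ, qPoly μ c i y / gammaMu μ i
          * (f (((i:ℝ) + 2*μ*thetaFn i)/(n:ℝ)) - f x) := by
    rw [show f x * (Qf μ c 1 * E) = f x * (E * Qf μ c 1) by ring, ← hwsum, ← tsum_mul_left,
      ← Summable.tsum_sub sf (sw.mul_left (f x))]
    exact tsum_congr (fun i => by ring)
  have sdiff : Summable (fun i : ℕ => qPoly μ c i y / gammaMu μ i
      * (f (((i:ℝ) + 2*μ*thetaFn i)/(n:ℝ)) - f x)) := by
    refine Summable.congr (sf.sub (sw.mul_left (f x))) (fun i => by ring)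
  have habs : Summable (fun i : ℕ => |qPoly μ c i y / gammaMu μ i
      * (f (((i:ℝ) + 2*μ*thetaFn i)/(n:ℝ)) - f x)|) := summable_abs_iff.mpr sdiff
  -- termwise majorant
  have hterm : ∀ i : ℕ, |qPoly μ c i y / gammaMu μ i
        * (f (((i:ℝ) + 2*μ*thetaFn i)/(n:ℝ)) - f x)|
      ≤ qPoly μ c i y / gammaMu μ i * (ε/2)
        + (M * (1/(n:ℝ)^2)) * ((lamK μ i - y)^2 * (qPoly μ c i y / gammaMu μ i)) := by
    intro i
    have ht0 : 0 ≤ ((i:ℝ) + 2*μ*thetaFn i)/(n:ℝ) := by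
      have := lamK_nonneg μ hμ i
      rw [hlam i]
      positivity
    have hmaj := hM x hx (((i:ℝ) + 2*μ*thetaFn i)/(n:ℝ)) ht0
    have ht2 : (((i:ℝ) + 2*μ*thetaFn i)/(n:ℝ) - x)^2 = (lamK μ i - y)^2 * (1/(n:ℝ)^2) := by
      rw [hlam i, hydef]
      field_simp
    rw [ht2] at hmaj
    rw [abs_mul, abs_of_nonneg (hw0 i)]
    calc qPoly μ c i y / gammaMu μ i * |f (((i:ℝ) + 2*μ*thetaFn i)/(n:ℝ)) - f x|
        ≤ qPoly μ c i y / gammaMu μ i * (ε/2 + M * ((lamK μ i - y)^2 * (1/(n:ℝ)^2))) :=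
          mul_le_mul_of_nonneg_left hmaj (hw0 i)
      _ = qPoly μ c i y / gammaMu μ i * (ε/2)
          + (M * (1/(n:ℝ)^2)) * ((lamK μ i - y)^2 * (qPoly μ c i y / gammaMu μ i)) := by ring
  have srhs : Summable (fun i : ℕ => qPoly μ c i y / gammaMu μ i * (ε/2)
      + (M * (1/(n:ℝ)^2)) * ((lamK μ i - y)^2 * (qPoly μ c i y / gammaMu μ i))) :=
    (sw.mul_right (ε/2)).add (SG.mul_left _)
  have key : |(∑' i : ℕ, qPoly μ c i y / gammaMu μ i * f (((i:ℝ) + 2*μ*thetaFn i)/(n:ℝ)))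
      - f x * (Qf μ c 1 * E)|
      ≤ (ε/2) * (E * Qf μ c 1) + (M * (1/(n:ℝ)^2)) * TG := by
    rw [hdiff]
    calc |∑' i : ℕ, qPoly μ c i y / gammaMu μ i
          * (f (((i:ℝ) + 2*μ*thetaFn i)/(n:ℝ)) - f x)|
        ≤ ∑' i : ℕ, |qPoly μ c i y / gammaMu μ i
          * (f (((i:ℝ) + 2*μ*thetaFn i)/(n:ℝ)) - f x)| := abs_tsum_le' habs
      _ ≤ ∑' i : ℕ, (qPoly μ c i y / gammaMu μ i * (ε/2)
          + (M * (1/(n:ℝ)^2)) * ((lamK μ i - y)^2 * (qPoly μ c i y / gammaMu μ i))) :=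
          Summable.tsum_le_tsum hterm habs srhs
      _ = (∑' i : ℕ, qPoly μ c i y / gammaMu μ i) * (ε/2)
          + (M * (1/(n:ℝ)^2)) * TG := by
          rw [Summable.tsum_add (sw.mul_right (ε/2)) (SG.mul_left _), tsum_mul_right, tsum_mul_left,
            hTGdef]
      _ = (ε/2) * (E * Qf μ c 1) + (M * (1/(n:ℝ)^2)) * TG := by rw [hwsum]; ring
  -- numeric bound on the second moment term
  have hyq : y * (1/(n:ℝ)^2) ≤ q * (1/(n:ℝ)) := by
    have h1 : y * (1/(n:ℝ)^2) = x * (1/(n:ℝ)) := by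
      rw [hydef]; field_simp
    rw [h1]
    exact mul_le_mul_of_nonneg_right hx.2 (by positivity)
  have hnn : (1:ℝ)/(n:ℝ)^2 ≤ 1/(n:ℝ) := by
    rw [div_le_div_iff₀ (by positivity) (by positivity)]
    nlinarith
  have hmom : (M * (1/(n:ℝ)^2)) * TG ≤ (B/(n:ℝ)) * (Qf μ c 1 * E) := by
    have hBQ : (B/(n:ℝ)) * (Qf μ c 1 * E) = (M * (2*(1+2*μ)*q*La0 + 2*La2) * (1/(n:ℝ))) * E := by
      rw [hBdef]
      field_simp
    rw [hBQ]
    calc (M * (1/(n:ℝ)^2)) * TG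
        ≤ (M * (1/(n:ℝ)^2)) * ((2*((1+2*μ)*y*E)) * La0 + (2*E) * La2) :=
          mul_le_mul_of_nonneg_left hTG (by positivity)
      _ = (2*(1+2*μ)*La0*M*E) * (y*(1/(n:ℝ)^2)) + (2*La2*M*E) * (1/(n:ℝ)^2) := by ring
      _ ≤ (2*(1+2*μ)*La0*M*E) * (q*(1/(n:ℝ))) + (2*La2*M*E) * (1/(n:ℝ)) := by
          have e1 := mul_le_mul_of_nonneg_left hyq
            (show (0:ℝ) ≤ 2*(1+2*μ)*La0*M*E by positivity)
          have e2 := mul_le_mul_of_nonneg_left hnn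
            (show (0:ℝ) ≤ 2*La2*M*E by positivity)
          have e2' : (2*La2*M*E) * ((1:ℝ)/(n:ℝ)^2) ≤ (2*La2*M*E) * (1/(n:ℝ)) := e2
          linarith
      _ = (M * (2*(1+2*μ)*q*La0 + 2*La2) * (1/(n:ℝ))) * E := by ring
  -- conclude
  have hKop : Kop μ c n f x = 1/(Qf μ c 1 * E) *
      ∑' i : ℕ, qPoly μ c i y / gammaMu μ i * f (((i:ℝ) + 2*μ*thetaFn i)/(n:ℝ)) := by
    rw [Kop, dunklExp, ← hydef, ← hEdef]
  rw [Real.dist_eq, hKop]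
  set S : ℝ := ∑' i : ℕ, qPoly μ c i y / gammaMu μ i
    * f (((i:ℝ) + 2*μ*thetaFn i)/(n:ℝ)) with hSdef
  have h9 : f x - 1/(Qf μ c 1 * E) * S = -((S - f x * (Qf μ c 1 * E))/(Qf μ c 1 * E)) := by
    field_simp
    ring
  rw [h9, abs_neg, abs_div, abs_of_pos hQE]
  rw [div_lt_iff₀ hQE]
  have hBn : B/(n:ℝ) < ε/2 := by
    have h10 : B/(ε/2) < (n:ℝ) := by
      have h11 : (N0:ℝ) ≤ (n:ℝ) := by
        exact_mod_cast le_trans (le_max_left N0 1) hn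
      linarith
    rw [div_lt_iff₀ hnpos]
    have := (div_lt_iff₀ (half_pos hε)).mp h10
    linarith
  calc |S - f x * (Qf μ c 1 * E)|
      ≤ (ε/2) * (E * Qf μ c 1) + (M * (1/(n:ℝ)^2)) * TG := key
    _ ≤ (ε/2) * (E * Qf μ c 1) + (B/(n:ℝ)) * (Qf μ c 1 * E) := by linarith
    _ = (ε/2 + B/(n:ℝ)) * (Qf μ c 1 * E) := by ring
    _ < ε * (Qf μ c 1 * E) := by
        have : ε/2 + B/(n:ℝ) < ε := by linarith
        exact mul_lt_mul_of_pos_right this hQE
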